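/- Let v_1,…,v_n be unit vectors in ℝ^d, w_1,…,w_n real weights with Σ w_j = 1, and t ≥ 1. Then (v_j),(w_j) is a weighted spherical t-design (i.e., integrates all polynomials of degree ≤ t on ℝ^d against normalized surface measure) if and only if Σ_j Σ_k w_j w_k ⟨v_j,v_k⟩^t = b_t(ℝ^d) and Σ_j Σ_k w_j w_k ⟨v_j,v_k⟩^{t−1} = b_{t−1}(ℝ^d). -/

import Mathlib

open MeasureTheory Finset

noncomputable def sphericalMoment (d m : ℕ) : ℝ :=
  if Odd m then 0 else
    (∏ i ∈ Finset.range (m / 2), (2 * i + 1 : ℝ)) /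
    (∏ i ∈ Finset.range (m / 2), ((d : ℝ) + 2 * i))

namespace WTD

variable {d : ℕ}

lemma sum_sq_eq_one {x : EuclideanSpace ℝ (Fin d)} (h : ‖x‖ = 1) :
    ∑ i, (x i) ^ 2 = 1 := by
  have h1 := EuclideanSpace.norm_eq x
  rw [h] at h1
  have h2 := Real.sqrt_eq_one.mp h1.symm
  simpa [Real.norm_eq_abs, sq_abs] using h2

lemma abs_coord_le_one {x : EuclideanSpace ℝ (Fin d)} (h : ‖x‖ = 1) (i : Fin d) :
    |x i| ≤ 1 := by
  have hs := sum_sq_eq_one h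
  have h1 : (x i) ^ 2 ≤ ∑ i, (x i) ^ 2 :=
    Finset.single_le_sum (f := fun i => (x i) ^ 2) (fun _ _ => by positivity) (mem_univ i)
  nlinarith [abs_nonneg (x i), sq_abs (x i)]

variable (σ : Measure (EuclideanSpace ℝ (Fin d))) [IsProbabilityMeasure σ]

lemma integrable_of_bdd (hsupp : ∀ᵐ x ∂σ, ‖x‖ = 1)
    {f : EuclideanSpace ℝ (Fin d) → ℝ} (hf : Continuous f)
    (hb : ∀ x : EuclideanSpace ℝ (Fin d), ‖x‖ = 1 → |f x| ≤ 1) : Integrable f σ :=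
  (integrable_const (1 : ℝ)).mono' hf.aestronglyMeasurable
    (hsupp.mono fun x hx => by simpa using hb x hx)

lemma integral_comp_iso
    (hinv : ∀ O : (EuclideanSpace ℝ (Fin d)) ≃ₗᵢ[ℝ] (EuclideanSpace ℝ (Fin d)),
      Measure.map (⇑O) σ = σ)
    (O : (EuclideanSpace ℝ (Fin d)) ≃ₗᵢ[ℝ] (EuclideanSpace ℝ (Fin d)))
    {f : EuclideanSpace ℝ (Fin d) → ℝ} (hf : Continuous f) :
    ∫ x, f x ∂σ = ∫ x, f (O x) ∂σ := by
  conv_lhs => rw [← hinv O]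
  exact integral_map O.continuous.aemeasurable
    (by rw [hinv O]; exact hf.aestronglyMeasurable)

/-- Two-coordinate moments. -/
noncomputable def mom (i j : Fin d) (a b : ℕ) : ℝ := ∫ x, (x i) ^ a * (x j) ^ b ∂σ

lemma cont_mom (i j : Fin d) (a b : ℕ) :
    Continuous fun x : EuclideanSpace ℝ (Fin d) => (x i) ^ a * (x j) ^ b :=
  (((PiLp.continuous_apply _ _ i).pow a).mul ((PiLp.continuous_apply _ _ j).pow b))

lemma bdd_mom (i j : Fin d) (a b : ℕ) {x : EuclideanSpace ℝ (Fin d)} (h : ‖x‖ = 1) :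
    |(x i) ^ a * (x j) ^ b| ≤ 1 := by
  rw [abs_mul, abs_pow, abs_pow]
  calc |x i| ^ a * |x j| ^ b ≤ 1 ^ a * 1 ^ b := by
        gcongr <;> first | exact abs_nonneg _ | exact abs_coord_le_one h _
    _ = 1 := by norm_num

lemma integrable_mom (hsupp : ∀ᵐ x ∂σ, ‖x‖ = 1) (i j : Fin d) (a b : ℕ) :
    Integrable (fun x => (x i) ^ a * (x j) ^ b) σ :=
  integrable_of_bdd σ hsupp (cont_mom i j a b) (fun x hx => bdd_mom i j a b hx)

lemma mom_perm
    (hinv : ∀ O : (EuclideanSpace ℝ (Fin d)) ≃ₗᵢ[ℝ] (EuclideanSpace ℝ (Fin d)),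
      Measure.map (⇑O) σ = σ)
    (π : Equiv.Perm (Fin d)) (i j : Fin d) (a b : ℕ) :
    mom σ i j a b = mom σ (π i) (π j) a b := by
  rw [mom, mom, integral_comp_iso σ hinv (LinearIsometryEquiv.piLpCongrLeft 2 ℝ ℝ π)
    (cont_mom (π i) (π j) a b)]
  congr 1
  funext x
  simp only [LinearIsometryEquiv.piLpCongrLeft_apply, Equiv.piCongrLeft'_apply]
  rw [Equiv.symm_apply_apply, Equiv.symm_apply_apply]

lemma mom_neg_left
    (hinv : ∀ O : (EuclideanSpace ℝ (Fin d)) ≃ₗᵢ[ℝ] (EuclideanSpace ℝ (Fin d)),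
      Measure.map (⇑O) σ = σ)
    (i j : Fin d) (hij : i ≠ j) (a b : ℕ) (ha : Odd a) : mom σ i j a b = 0 := by
  classical
  set O := LinearIsometryEquiv.piLpCongrRight 2
    (fun k : Fin d => if k = i then LinearIsometryEquiv.neg ℝ (E := ℝ)
      else LinearIsometryEquiv.refl ℝ ℝ) with hO
  have hOx : ∀ (x : EuclideanSpace ℝ (Fin d)) (k : Fin d),
      (O x) k = if k = i then -(x k) else x k := by
    intro x k
    rw [hO, LinearIsometryEquiv.piLpCongrRight_apply]
    by_cases h : k = i
    · subst h; simp
    · simp [h]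
  have key : mom σ i j a b = - mom σ i j a b := by
    nth_rewrite 1 [mom, integral_comp_iso σ hinv O (cont_mom i j a b)]
    rw [mom, ← integral_neg]
    congr 1
    funext x
    rw [hOx x i, hOx x j, if_pos rfl, if_neg hij.symm, ha.neg_pow]
    ring
  linarith

end WTD

namespace WTD
set_option linter.unusedSectionVars false

variable {d : ℕ}
variable (σ : Measure (EuclideanSpace ℝ (Fin d))) [IsProbabilityMeasure σ]

lemma inner_pow_integral_eq
    (hinv : ∀ O : (EuclideanSpace ℝ (Fin d)) ≃ₗᵢ[ℝ] (EuclideanSpace ℝ (Fin d)),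
      Measure.map (⇑O) σ = σ)
    {y z : EuclideanSpace ℝ (Fin d)} (h : ‖y‖ = ‖z‖) (m : ℕ) :
    ∫ x, (inner ℝ x y : ℝ) ^ m ∂σ = ∫ x, (inner ℝ x z : ℝ) ^ m ∂σ := by
  set O := Submodule.reflection (ℝ ∙ (z - y))ᗮ with hO
  have hOz : O z = y := Submodule.reflection_sub h.symm
  have cont : Continuous fun x : EuclideanSpace ℝ (Fin d) => (inner ℝ x y : ℝ) ^ m :=
    (continuous_id.inner continuous_const).pow m
  calc ∫ x, (inner ℝ x y : ℝ) ^ m ∂σ = ∫ x, (inner ℝ (O x) y : ℝ) ^ m ∂σ :=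
        integral_comp_iso σ hinv O cont
    _ = ∫ x, (inner ℝ x z : ℝ) ^ m ∂σ := by
        congr 1; funext x
        rw [← hOz, LinearIsometryEquiv.inner_map_map]

lemma rel1 (hsupp : ∀ᵐ x ∂σ, ‖x‖ = 1)
    (hinv : ∀ O : (EuclideanSpace ℝ (Fin d)) ≃ₗᵢ[ℝ] (EuclideanSpace ℝ (Fin d)),
      Measure.map (⇑O) σ = σ)
    (i0 i1 : Fin d) (h01 : i0 ≠ i1) (m : ℕ) :
    mom σ i0 i1 m 0 = mom σ i0 i1 (m + 2) 0 + ((d : ℝ) - 1) * mom σ i0 i1 m 2 := by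
  classical
  have hd1 : 1 ≤ d := i0.pos
  have step1 : mom σ i0 i1 m 0 = ∫ x, ∑ i, (x i0) ^ m * (x i) ^ 2 ∂σ := by
    rw [mom]
    refine integral_congr_ae (hsupp.mono fun x hx => ?_)
    simp only [pow_zero, mul_one]
    rw [← Finset.mul_sum, sum_sq_eq_one hx, mul_one]
  have step2 : ∫ x, ∑ i, (x i0) ^ m * (x i) ^ 2 ∂σ = ∑ i, ∫ x, (x i0) ^ m * (x i) ^ 2 ∂σ :=
    integral_finset_sum _ (fun i _ => integrable_mom σ hsupp i0 i m 2)
  have step3 : ∀ i : Fin d, i ≠ i0 → ∫ x, (x i0) ^ m * (x i) ^ 2 ∂σ = mom σ i0 i1 m 2 := by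
    intro i hi
    have : ∫ x, (x i0) ^ m * (x i) ^ 2 ∂σ = mom σ i0 i m 2 := rfl
    rw [this, mom_perm σ hinv (Equiv.swap i i1) i0 i m 2]
    rw [Equiv.swap_apply_left]
    congr 1
    exact Equiv.swap_apply_of_ne_of_ne (Ne.symm hi) h01
  have step4 : ∫ x, (x i0) ^ m * (x i0) ^ 2 ∂σ = mom σ i0 i1 (m + 2) 0 := by
    rw [mom]
    congr 1; funext x; rw [pow_add]; ring
  rw [step1, step2, ← Finset.add_sum_erase _ _ (mem_univ i0), step4]
  congr 1
  rw [Finset.sum_congr rfl (fun i hi => step3 i (Finset.ne_of_mem_erase hi)),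
    Finset.sum_const, Finset.card_erase_of_mem (mem_univ i0), Finset.card_univ,
    Fintype.card_fin, nsmul_eq_mul, Nat.cast_sub hd1, Nat.cast_one]

lemma sum_range_even (e : ℕ) (t : ℕ → ℝ) (h : ∀ k, Odd k → t k = 0) :
    ∑ k ∈ range (2 * e + 1), t k = ∑ j ∈ range (e + 1), t (2 * j) := by
  induction e with
  | zero => simp
  | succ e ih =>
      have h1 : 2 * (e + 1) + 1 = (2 * e + 1) + 1 + 1 := by ring
      rw [h1, sum_range_succ, sum_range_succ, ih, sum_range_succ,
        h (2 * e + 1) ⟨e, by ring⟩, show 2 * e + 1 + 1 = 2 * (e + 1) by ring,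
        sum_range_succ, sum_range_succ]
      ring

lemma expand_F (hsupp : ∀ᵐ x ∂σ, ‖x‖ = 1) (i0 i1 : Fin d) (M : ℕ) (a b : ℝ) :
    ∫ x, (a * x i0 + b * x i1) ^ M ∂σ
      = ∑ k ∈ range (M + 1),
          (a ^ k * b ^ (M - k) * (Nat.choose M k : ℝ)) * mom σ i0 i1 k (M - k) := by
  have h1 : ∀ x : EuclideanSpace ℝ (Fin d), (a * x i0 + b * x i1) ^ M
      = ∑ k ∈ range (M + 1),
          (a ^ k * b ^ (M - k) * (Nat.choose M k : ℝ)) * ((x i0) ^ k * (x i1) ^ (M - k)) := by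
    intro x
    rw [add_pow]
    refine Finset.sum_congr rfl fun k _ => ?_
    rw [mul_pow, mul_pow]; ring
  simp_rw [h1]
  rw [integral_finset_sum _ (fun k _ => ((integrable_mom σ hsupp i0 i1 k (M - k)).const_mul _))]
  exact Finset.sum_congr rfl fun k _ => integral_const_mul _ _

lemma F_const (hsupp : ∀ᵐ x ∂σ, ‖x‖ = 1)
    (hinv : ∀ O : (EuclideanSpace ℝ (Fin d)) ≃ₗᵢ[ℝ] (EuclideanSpace ℝ (Fin d)),
      Measure.map (⇑O) σ = σ)
    (i0 i1 : Fin d) (h01 : i0 ≠ i1) (M : ℕ) {u : ℝ} (h0 : 0 ≤ u) (h1 : u ≤ 1) :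
    ∫ x, (Real.sqrt (1 - u) * x i0 + Real.sqrt u * x i1) ^ M ∂σ = ∫ x, (x i1) ^ M ∂σ := by
  classical
  set a := Real.sqrt (1 - u) with hadef
  set b := Real.sqrt u with hbdef
  have ha2 : a ^ 2 = 1 - u := Real.sq_sqrt (by linarith)
  have hb2 : b ^ 2 = u := Real.sq_sqrt h0
  set y : EuclideanSpace ℝ (Fin d) :=
    EuclideanSpace.single i0 a + EuclideanSpace.single i1 b with hy
  have hinner : ∀ x : EuclideanSpace ℝ (Fin d), (inner ℝ x y : ℝ) = a * x i0 + b * x i1 := by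
    intro x
    rw [hy, inner_add_right, EuclideanSpace.inner_single_right, EuclideanSpace.inner_single_right]
    simp [mul_comm]
  have hny : ‖y‖ = 1 := by
    have hsq : ‖y‖ ^ 2 = 1 := by
      rw [← real_inner_self_eq_norm_sq, hinner y, hy]
      simp [EuclideanSpace.single_apply, h01, (Ne.symm h01)]
      nlinarith
    nlinarith [norm_nonneg y]
  have hz : ‖(EuclideanSpace.single i1 (1:ℝ) : EuclideanSpace ℝ (Fin d))‖ = 1 := by
    rw [EuclideanSpace.norm_single]; norm_num
  have := inner_pow_integral_eq σ hinv (hny.trans hz.symm) M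
  calc ∫ x, (a * x i0 + b * x i1) ^ M ∂σ = ∫ x, (inner ℝ x y : ℝ) ^ M ∂σ := by
        congr 1; funext x; rw [hinner]
    _ = ∫ x, (inner ℝ x (EuclideanSpace.single i1 (1:ℝ)) : ℝ) ^ M ∂σ := this
    _ = ∫ x, (x i1) ^ M ∂σ := by
        congr 1; funext x
        rw [EuclideanSpace.inner_single_right]
        simp

end WTD


lemma coeff_zero_osX (e : ℕ) : ((1 - Polynomial.X : Polynomial ℝ) ^ e).coeff 0 = 1 := by
  rw [Polynomial.coeff_zero_eq_eval_zero]; simp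

lemma coeff_one_osX (e : ℕ) : ((1 - Polynomial.X : Polynomial ℝ) ^ e).coeff 1 = -(e : ℝ) := by
  induction e with
  | zero => simp [Polynomial.coeff_one]
  | succ e ih =>
      rw [pow_succ, mul_sub, mul_one, Polynomial.coeff_sub, ih,
        show (1:ℕ) = 0 + 1 from rfl, Polynomial.coeff_mul_X, coeff_zero_osX]
      push_cast; ring

lemma coeff_one_term (j s : ℕ) :
    (((1 - Polynomial.X : Polynomial ℝ) ^ j) * Polynomial.X ^ s).coeff 1
      = if s = 0 then -(j : ℝ) else if s = 1 then 1 else 0 := by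
  rw [Polynomial.coeff_mul_X_pow']
  rcases Nat.lt_or_ge 1 s with h | h
  · rw [if_neg (by omega), if_neg (by omega), if_neg (by omega)]
  · interval_cases s
    · simp [coeff_one_osX]
    · simp [coeff_zero_osX]

namespace WTD
set_option linter.unusedSectionVars false

variable {d : ℕ}
variable (σ : Measure (EuclideanSpace ℝ (Fin d))) [IsProbabilityMeasure σ]

lemma rel2 (hsupp : ∀ᵐ x ∂σ, ‖x‖ = 1)
    (hinv : ∀ O : (EuclideanSpace ℝ (Fin d)) ≃ₗᵢ[ℝ] (EuclideanSpace ℝ (Fin d)),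
      Measure.map (⇑O) σ = σ)
    (i0 i1 : Fin d) (h01 : i0 ≠ i1) (e : ℕ) :
    (Nat.choose (2 * e + 2) 2 : ℝ) * mom σ i0 i1 (2 * e) 2
      = ((e : ℝ) + 1) * mom σ i0 i1 (2 * e + 2) 0 := by
  classical
  set M := 2 * e + 2 with hM
  set E := e + 1 with hE
  set κ : ℕ → ℝ := fun k => mom σ i0 i1 k (M - k) with hκ
  have hodd : ∀ k, Odd k → κ k = 0 := fun k hk =>
    mom_neg_left σ hinv i0 i1 h01 k (M - k) hk
  set P : Polynomial ℝ := ∑ j ∈ range (E + 1),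
      Polynomial.C ((Nat.choose M (2 * j) : ℝ) * κ (2 * j)) *
        ((1 - Polynomial.X) ^ j * Polynomial.X ^ (E - j)) with hP
  have heval : ∀ u : ℝ, u ∈ Set.Icc (0 : ℝ) 1 → P.eval u = κ 0 := by
    rintro u ⟨h0, h1⟩
    set a := Real.sqrt (1 - u) with hadef
    set b := Real.sqrt u with hbdef
    have ha2 : a ^ 2 = 1 - u := Real.sq_sqrt (by linarith)
    have hb2 : b ^ 2 = u := Real.sq_sqrt h0
    have hz : ∫ x, (x i1) ^ M ∂σ = κ 0 := by
      simp only [hκ, Nat.sub_zero]; rw [mom]; congr 1; funext x; simp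
    have hchain : κ 0 = ∑ j ∈ range (E + 1),
        (a ^ (2 * j) * b ^ (M - 2 * j) * (Nat.choose M (2 * j) : ℝ)) * κ (2 * j) := by
      rw [← hz, ← F_const σ hsupp hinv i0 i1 h01 M h0 h1,
        expand_F σ hsupp i0 i1 M a b,
        show M + 1 = 2 * E + 1 by omega,
        sum_range_even E _ (fun k hk => by
          have h0 := hodd k hk
          simp only [hκ] at h0
          rw [h0, mul_zero])]
    have hPe : P.eval u = ∑ j ∈ range (E + 1),
        ((Nat.choose M (2 * j) : ℝ) * κ (2 * j)) * ((1 - u) ^ j * u ^ (E - j)) := by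
      rw [hP, Polynomial.eval_finset_sum]
      refine Finset.sum_congr rfl fun j _ => ?_
      simp
    rw [hPe, hchain]
    refine Finset.sum_congr rfl fun j hj => ?_
    have hjE : j ≤ E := Nat.lt_succ_iff.mp (mem_range.mp hj)
    have h2 : M - 2 * j = 2 * (E - j) := by omega
    rw [pow_mul, ha2, h2, pow_mul, hb2]
    ring
  have hP0 : P = Polynomial.C (κ 0) := by
    have hroot : {x : ℝ | (P - Polynomial.C (κ 0)).IsRoot x}.Infinite := by
      refine (Set.Icc_infinite (zero_lt_one (α := ℝ))).mono ?_
      intro u hu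
      simp only [Set.mem_setOf_eq, Polynomial.IsRoot, Polynomial.eval_sub,
        Polynomial.eval_C, heval u hu, sub_self]
    exact eq_of_sub_eq_zero (Polynomial.eq_zero_of_infinite_isRoot _ hroot)
  have hc1 : P.coeff 1 = 0 := by rw [hP0, Polynomial.coeff_C]; simp
  have hsum : P.coeff 1 = ∑ j ∈ range (E + 1),
      ((Nat.choose M (2 * j) : ℝ) * κ (2 * j)) *
        (((1 - Polynomial.X : Polynomial ℝ) ^ j * Polynomial.X ^ (E - j)).coeff 1) := by
    rw [hP, Polynomial.finset_sum_coeff]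
    exact sum_congr rfl fun j _ => Polynomial.coeff_C_mul _
  rw [show E + 1 = e + 1 + 1 by omega, sum_range_succ, sum_range_succ] at hsum
  have hzero : ∀ j ∈ range e, ((Nat.choose M (2 * j) : ℝ) * κ (2 * j)) *
      (((1 - Polynomial.X : Polynomial ℝ) ^ j * Polynomial.X ^ (E - j)).coeff 1) = 0 := by
    intro j hj
    have hj' : j < e := mem_range.mp hj
    rw [coeff_one_term, if_neg (by omega), if_neg (by omega), mul_zero]
  rw [Finset.sum_congr rfl hzero, Finset.sum_const_zero, zero_add,
    coeff_one_term, if_neg (by omega), if_pos (by omega),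
    coeff_one_term, if_pos (by omega)] at hsum
  have hce : (Nat.choose M (2 * e) : ℝ) = (Nat.choose M 2 : ℝ) := by
    rw [show 2 * e = M - 2 by omega, Nat.choose_symm (by omega)]
  have hcE : Nat.choose M (2 * (e + 1)) = 1 := by
    rw [show 2 * (e + 1) = M by omega, Nat.choose_self]
  have hκe : κ (2 * e) = mom σ i0 i1 (2 * e) 2 := by
    show mom σ i0 i1 (2 * e) (M - 2 * e) = _
    rw [show M - 2 * e = 2 by omega]
  have hκE : κ (2 * (e + 1)) = mom σ i0 i1 M 0 := by
    show mom σ i0 i1 (2 * (e + 1)) (M - 2 * (e + 1)) = _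
    rw [show M - 2 * (e + 1) = 0 by omega, show 2 * (e + 1) = M by omega]
  rw [hce, hcE, hκe, hκE, hc1] at hsum
  push_cast at hsum ⊢
  linarith

end WTD

namespace WTD
set_option linter.unusedSectionVars false
variable {d : ℕ}
variable (σ : Measure (EuclideanSpace ℝ (Fin d))) [IsProbabilityMeasure σ]

lemma sm_succ (hd : 1 ≤ d) (e : ℕ) :
    sphericalMoment d (2 * e + 2)
      = sphericalMoment d (2 * e) * (2 * (e : ℝ) + 1) / ((d : ℝ) + 2 * e) := by
  have hd1 : (1 : ℝ) ≤ (d : ℝ) := by exact_mod_cast hd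
  have hden : ∀ n : ℕ, (∏ i ∈ range n, ((d : ℝ) + 2 * i)) ≠ 0 := by
    intro n
    refine ne_of_gt (Finset.prod_pos fun i _ => ?_)
    have : (0 : ℝ) ≤ 2 * (i : ℝ) := by positivity
    linarith
  have hne : ((d : ℝ) + 2 * (e : ℝ)) ≠ 0 := by
    have : (0 : ℝ) ≤ 2 * (e : ℝ) := by positivity
    intro h; linarith
  rw [sphericalMoment, sphericalMoment, if_neg (by rw [Nat.odd_iff]; omega),
    if_neg (by rw [Nat.odd_iff]; omega),
    show (2 * e + 2) / 2 = e + 1 by omega, show 2 * e / 2 = e by omega,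
    Finset.prod_range_succ, Finset.prod_range_succ]
  field_simp

lemma mom_even (hd : 1 ≤ d) (hsupp : ∀ᵐ x ∂σ, ‖x‖ = 1)
    (hinv : ∀ O : (EuclideanSpace ℝ (Fin d)) ≃ₗᵢ[ℝ] (EuclideanSpace ℝ (Fin d)),
      Measure.map (⇑O) σ = σ)
    (i0 i1 : Fin d) (h01 : i0 ≠ i1) (e : ℕ) :
    mom σ i0 i1 (2 * e) 0 = sphericalMoment d (2 * e) := by
  induction e with
  | zero =>
      have h1 : mom σ i0 i1 (2 * 0) 0 = 1 := by
        rw [mom]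
        simp
      rw [h1, sphericalMoment]
      simp [Nat.odd_iff]
  | succ e ih =>
      have h1 := rel1 σ hsupp hinv i0 i1 h01 (2 * e)
      have h2 := rel2 σ hsupp hinv i0 i1 h01 e
      have hch : (Nat.choose (2 * e + 2) 2 : ℝ) = ((e : ℝ) + 1) * (2 * (e : ℝ) + 1) := by
        rw [Nat.cast_choose_two]; push_cast; ring
      rw [hch] at h2
      have he1 : ((e : ℝ) + 1) ≠ 0 := by positivity
      have hB : (2 * (e : ℝ) + 1) * mom σ i0 i1 (2 * e) 2 = mom σ i0 i1 (2 * e + 2) 0 :=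
        mul_left_cancel₀ he1 (by linear_combination h2)
      have hne : ((d : ℝ) + 2 * (e : ℝ)) ≠ 0 := by
        have h0 : (0 : ℝ) ≤ 2 * (e : ℝ) := by positivity
        have hd1 : (1 : ℝ) ≤ (d : ℝ) := by exact_mod_cast hd
        intro h; linarith
      rw [show 2 * (e + 1) = 2 * e + 2 by ring, sm_succ hd e, eq_div_iff hne, ← ih]
      linear_combination (-(2 * (e : ℝ) + 1)) * h1 - ((d : ℝ) - 1) * hB

lemma moment_star (hd : 2 ≤ d) (hsupp : ∀ᵐ x ∂σ, ‖x‖ = 1)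
    (hinv : ∀ O : (EuclideanSpace ℝ (Fin d)) ≃ₗᵢ[ℝ] (EuclideanSpace ℝ (Fin d)),
      Measure.map (⇑O) σ = σ)
    (m : ℕ) {y : EuclideanSpace ℝ (Fin d)} (hy : ‖y‖ = 1) :
    ∫ x, (inner ℝ x y : ℝ) ^ m ∂σ = sphericalMoment d m := by
  set i0 : Fin d := ⟨0, by omega⟩ with hi0
  set i1 : Fin d := ⟨1, by omega⟩ with hi1
  have h01 : i0 ≠ i1 := by simp [hi0, hi1, Fin.ext_iff]
  have hz : ‖(EuclideanSpace.single i0 (1 : ℝ) : EuclideanSpace ℝ (Fin d))‖ = 1 := by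
    rw [EuclideanSpace.norm_single]; norm_num
  have h1 : ∫ x, (inner ℝ x y : ℝ) ^ m ∂σ = mom σ i0 i1 m 0 := by
    rw [inner_pow_integral_eq σ hinv (hy.trans hz.symm) m, mom]
    congr 1; funext x
    rw [EuclideanSpace.inner_single_right]
    simp
  rw [h1]
  rcases Nat.even_or_odd m with hev | hod
  · obtain ⟨e, he⟩ := hev
    rw [show m = 2 * e by omega]
    exact mom_even σ (by omega) hsupp hinv i0 i1 h01 e
  · rw [mom_neg_left σ hinv i0 i1 h01 m 0 hod, sphericalMoment, if_pos hod]

end WTD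

namespace WTD
set_option linter.unusedSectionVars false
variable {d : ℕ}
variable (σ : Measure (EuclideanSpace ℝ (Fin d))) [IsProbabilityMeasure σ]

lemma inner_eq (x y : EuclideanSpace ℝ (Fin d)) : (inner ℝ x y : ℝ) = ∑ i, x i * y i := by
  rw [PiLp.inner_apply]
  simp [RCLike.inner_apply, mul_comm]

lemma inner_pow_expand (m : ℕ) (x y : EuclideanSpace ℝ (Fin d)) :
    (inner ℝ x y : ℝ) ^ m = ∑ g : Fin m → Fin d, (∏ l, x (g l)) * (∏ l, y (g l)) := by
  classical
  rw [inner_eq]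
  have h1 : (∑ i, x i * y i) ^ m = ∏ _l : Fin m, (∑ i, x i * y i) := by
    rw [Finset.prod_const, Finset.card_univ, Fintype.card_fin]
  rw [h1, Finset.prod_univ_sum, Fintype.piFinset_univ]
  exact Finset.sum_congr rfl fun g _ => by rw [← Finset.prod_mul_distrib]

lemma cont_P {m : ℕ} (g : Fin m → Fin d) :
    Continuous fun x : EuclideanSpace ℝ (Fin d) => ∏ l, x (g l) :=
  continuous_finset_prod _ fun l _ => PiLp.continuous_apply _ _ (g l)

lemma bdd_P {m : ℕ} (g : Fin m → Fin d) {x : EuclideanSpace ℝ (Fin d)} (h : ‖x‖ = 1) :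
    |∏ l, x (g l)| ≤ 1 := by
  rw [Finset.abs_prod]
  exact Finset.prod_le_one (fun _ _ => abs_nonneg _) (fun l _ => abs_coord_le_one h _)

lemma integrable_P (hsupp : ∀ᵐ x ∂σ, ‖x‖ = 1) {m : ℕ} (g : Fin m → Fin d) :
    Integrable (fun x => ∏ l, x (g l)) σ :=
  integrable_of_bdd σ hsupp (cont_P g) (fun _ hx => bdd_P g hx)

lemma gmom_eq (hd : 2 ≤ d) (hsupp : ∀ᵐ x ∂σ, ‖x‖ = 1)
    (hinv : ∀ O : (EuclideanSpace ℝ (Fin d)) ≃ₗᵢ[ℝ] (EuclideanSpace ℝ (Fin d)),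
      Measure.map (⇑O) σ = σ)
    {n : ℕ} (v : Fin n → EuclideanSpace ℝ (Fin d)) (hv : ∀ j, ‖v j‖ = 1)
    (w : Fin n → ℝ) (hw : ∑ j, w j = 1) (m : ℕ)
    (hm : ∑ j, ∑ k, w j * w k * (inner ℝ (v j) (v k) : ℝ) ^ m = sphericalMoment d m)
    (g : Fin m → Fin d) :
    ∑ j, w j * ∏ l, v j (g l) = ∫ x, ∏ l, x (g l) ∂σ := by
  classical
  set A : (Fin m → Fin d) → ℝ := fun g => ∑ j, w j * ∏ l, v j (g l) with hA
  set B : (Fin m → Fin d) → ℝ := fun g => ∫ x, ∏ l, x (g l) ∂σ with hB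
  have hPint : ∀ g : Fin m → Fin d, Integrable (fun x => ∏ l, x (g l)) σ :=
    fun g => integrable_P σ hsupp g
  have S1 : ∑ g : Fin m → Fin d, A g ^ 2 = sphericalMoment d m := by
    rw [← hm]
    have step : ∀ g : Fin m → Fin d,
        A g ^ 2 = ∑ j, ∑ k, w j * w k * ((∏ l, v j (g l)) * (∏ l, v k (g l))) := by
      intro g
      rw [hA, sq, Finset.sum_mul_sum]
      exact Finset.sum_congr rfl fun j _ => Finset.sum_congr rfl fun k _ => by ring
    calc ∑ g : Fin m → Fin d, A g ^ 2
        = ∑ g : Fin m → Fin d, ∑ j, ∑ k,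
            w j * w k * ((∏ l, v j (g l)) * (∏ l, v k (g l))) :=
          Finset.sum_congr rfl fun g _ => step g
      _ = ∑ j, ∑ k, ∑ g : Fin m → Fin d,
            w j * w k * ((∏ l, v j (g l)) * (∏ l, v k (g l))) := by
          rw [Finset.sum_comm]
          exact Finset.sum_congr rfl fun j _ => Finset.sum_comm
      _ = ∑ j, ∑ k, w j * w k * (inner ℝ (v j) (v k) : ℝ) ^ m := by
          refine Finset.sum_congr rfl fun j _ => Finset.sum_congr rfl fun k _ => ?_
          rw [← Finset.mul_sum, inner_pow_expand]
  have S2 : ∑ g : Fin m → Fin d, A g * B g = sphericalMoment d m := by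
    have step : ∀ g : Fin m → Fin d,
        A g * B g = ∑ j, w j * ((∏ l, v j (g l)) * B g) := by
      intro g
      rw [hA, Finset.sum_mul]
      exact Finset.sum_congr rfl fun j _ => by ring
    calc ∑ g : Fin m → Fin d, A g * B g
        = ∑ j, ∑ g : Fin m → Fin d, w j * ((∏ l, v j (g l)) * B g) := by
          rw [Finset.sum_congr rfl fun g (_ : g ∈ univ) => step g, Finset.sum_comm]
      _ = ∑ j, w j * sphericalMoment d m := by
          refine Finset.sum_congr rfl fun j _ => ?_
          rw [← Finset.mul_sum]
          congr 1
          calc ∑ g : Fin m → Fin d, (∏ l, v j (g l)) * B g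
              = ∑ g : Fin m → Fin d, ∫ x, (∏ l, v j (g l)) * (∏ l, x (g l)) ∂σ :=
                Finset.sum_congr rfl fun g _ => (integral_const_mul _ _).symm
            _ = ∫ x, ∑ g : Fin m → Fin d, (∏ l, v j (g l)) * (∏ l, x (g l)) ∂σ :=
                (integral_finset_sum _ fun g _ => (hPint g).const_mul _).symm
            _ = ∫ x, (inner ℝ x (v j) : ℝ) ^ m ∂σ := by
                congr 1; funext x
                rw [← inner_pow_expand, real_inner_comm]
            _ = sphericalMoment d m := moment_star σ hd hsupp hinv m (hv j)
      _ = sphericalMoment d m := by rw [← Finset.sum_mul, hw, one_mul]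
  have S3 : ∑ g : Fin m → Fin d, B g ^ 2 = sphericalMoment d m := by
    calc ∑ g : Fin m → Fin d, B g ^ 2
        = ∑ g : Fin m → Fin d, ∫ x, B g * (∏ l, x (g l)) ∂σ :=
          Finset.sum_congr rfl fun g _ => by rw [integral_const_mul, sq]
      _ = ∫ x, ∑ g : Fin m → Fin d, B g * (∏ l, x (g l)) ∂σ :=
          (integral_finset_sum _ fun g _ => (hPint g).const_mul _).symm
      _ = ∫ _x, sphericalMoment d m ∂σ := by
          refine integral_congr_ae (hsupp.mono fun x hx => ?_)
          calc ∑ g : Fin m → Fin d, B g * (∏ l, x (g l))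
              = ∑ g : Fin m → Fin d, ∫ y, (∏ l, x (g l)) * (∏ l, y (g l)) ∂σ := by
                refine Finset.sum_congr rfl fun g _ => ?_
                rw [integral_const_mul, mul_comm]
            _ = ∫ y, ∑ g : Fin m → Fin d, (∏ l, x (g l)) * (∏ l, y (g l)) ∂σ :=
                (integral_finset_sum _ fun g _ => (hPint g).const_mul _).symm
            _ = ∫ y, (inner ℝ x y : ℝ) ^ m ∂σ := by
                congr 1; funext y
                rw [← inner_pow_expand]
            _ = ∫ y, (inner ℝ y x : ℝ) ^ m ∂σ := by
                congr 1; funext y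
                rw [real_inner_comm]
            _ = sphericalMoment d m := moment_star σ hd hsupp hinv m hx
      _ = sphericalMoment d m := by simp
  have hzero : ∑ g : Fin m → Fin d, (A g - B g) ^ 2 = 0 := by
    have step : ∀ g : Fin m → Fin d,
        (A g - B g) ^ 2 = A g ^ 2 - 2 * (A g * B g) + B g ^ 2 := fun g => by ring
    rw [Finset.sum_congr rfl fun g _ => step g, Finset.sum_add_distrib,
      Finset.sum_sub_distrib, ← Finset.mul_sum, S1, S2, S3]
    ring
  have hg := (Finset.sum_eq_zero_iff_of_nonneg
    (fun g _ => sq_nonneg (A g - B g))).mp hzero g (mem_univ g)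
  exact sub_eq_zero.mp (sq_eq_zero_iff.mp hg)

end WTD

namespace WTD
set_option linter.unusedSectionVars false
variable {d : ℕ}
variable (σ : Measure (EuclideanSpace ℝ (Fin d))) [IsProbabilityMeasure σ]

lemma sum_prod_sq (e : ℕ) {u : EuclideanSpace ℝ (Fin d)} (hu : ‖u‖ = 1) :
    ∑ h : Fin e → Fin d, ((∏ l, u (h l)) * (∏ l, u (h l))) = 1 := by
  classical
  have h1 : ∀ h : Fin e → Fin d,
      (∏ l, u (h l)) * (∏ l, u (h l)) = ∏ l : Fin e, (u (h l) * u (h l)) :=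
    fun h => (Finset.prod_mul_distrib).symm
  rw [Finset.sum_congr rfl fun h _ => h1 h]
  have h2 : ∑ h : Fin e → Fin d, ∏ l : Fin e, (u (h l) * u (h l))
      = ∏ _l : Fin e, ∑ i, u i * u i := by
    rw [Finset.prod_univ_sum, Fintype.piFinset_univ]
  rw [h2]
  have h3 : ∑ i, u i * u i = 1 := by
    rw [← sum_sq_eq_one hu]
    exact Finset.sum_congr rfl fun i _ => (sq (u i)).symm
  rw [h3]
  simp

lemma gmom_pad (hsupp : ∀ᵐ x ∂σ, ‖x‖ = 1)
    {n : ℕ} (v : Fin n → EuclideanSpace ℝ (Fin d)) (hv : ∀ j, ‖v j‖ = 1)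
    (w : Fin n → ℝ) {k e m : ℕ} (hm : k + (e + e) = m)
    (H : ∀ g : Fin m → Fin d, ∑ j, w j * ∏ l, v j (g l) = ∫ x, ∏ l, x (g l) ∂σ)
    (g0 : Fin k → Fin d) :
    ∑ j, w j * ∏ l, v j (g0 l) = ∫ x, ∏ l, x (g0 l) ∂σ := by
  classical
  have key : ∀ (u : EuclideanSpace ℝ (Fin d)) (h : Fin e → Fin d),
      (∏ l : Fin m, u ((Fin.append g0 (Fin.append h h) ∘ Fin.cast hm.symm) l))
        = (∏ l, u (g0 l)) * ((∏ l, u (h l)) * (∏ l, u (h l))) := by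
    intro u h
    have h1 : (∏ l : Fin m, u (Fin.append g0 (Fin.append h h) (Fin.cast hm.symm l)))
        = ∏ l : Fin (k + (e + e)), u (Fin.append g0 (Fin.append h h) l) :=
      Fintype.prod_equiv (finCongr hm.symm) _ _ (fun l => rfl)
    show (∏ l : Fin m, u (Fin.append g0 (Fin.append h h) (Fin.cast hm.symm l))) = _
    rw [h1, Fin.prod_univ_add]
    congr 1
    · exact Finset.prod_congr rfl fun l _ => by rw [Fin.append_left]
    · rw [Finset.prod_congr rfl fun (l : Fin (e + e)) (_ : l ∈ univ) =>
        (by rw [Fin.append_right] : u (Fin.append g0 (Fin.append h h) (Fin.natAdd k l))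
          = u (Fin.append h h l)), Fin.prod_univ_add]
      congr 1
      · exact Finset.prod_congr rfl fun l _ => by rw [Fin.append_left]
      · exact Finset.prod_congr rfl fun l _ => by rw [Fin.append_right]
  have Hh : ∀ h : Fin e → Fin d,
      ∑ j, w j * ((∏ l, v j (g0 l)) * ((∏ l, v j (h l)) * (∏ l, v j (h l))))
        = ∫ x, (∏ l, x (g0 l)) * ((∏ l, x (h l)) * (∏ l, x (h l))) ∂σ := by
    intro h
    have := H (Fin.append g0 (Fin.append h h) ∘ Fin.cast hm.symm)
    rw [Finset.sum_congr rfl fun j _ => by rw [key (v j) h]] at this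
    rw [this]
    congr 1; funext x; rw [key x h]
  have int3 : ∀ h : Fin e → Fin d,
      Integrable (fun x : EuclideanSpace ℝ (Fin d) =>
        (∏ l, x (g0 l)) * ((∏ l, x (h l)) * (∏ l, x (h l)))) σ := by
    intro h
    refine integrable_of_bdd σ hsupp ?_ ?_
    · exact (cont_P g0).mul ((cont_P h).mul (cont_P h))
    · intro x hx
      rw [abs_mul, abs_mul]
      have b0 := bdd_P g0 hx
      have b1 := bdd_P h hx
      have n0 := abs_nonneg (∏ l, x (g0 l))
      have n1 := abs_nonneg (∏ l, x (h l))
      nlinarith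
  have inner_sum : ∀ j : Fin n, ∑ h : Fin e → Fin d,
      w j * ((∏ l, v j (g0 l)) * ((∏ l, v j (h l)) * (∏ l, v j (h l))))
        = w j * ∏ l, v j (g0 l) := by
    intro j
    rw [← Finset.mul_sum, ← Finset.mul_sum, sum_prod_sq e (hv j), mul_one]
  calc ∑ j, w j * ∏ l, v j (g0 l)
      = ∑ h : Fin e → Fin d, ∑ j, w j *
          ((∏ l, v j (g0 l)) * ((∏ l, v j (h l)) * (∏ l, v j (h l)))) :=
        (Finset.sum_comm.trans (Finset.sum_congr rfl fun j _ => inner_sum j)).symm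
    _ = ∑ h : Fin e → Fin d, ∫ x, (∏ l, x (g0 l)) * ((∏ l, x (h l)) * (∏ l, x (h l))) ∂σ :=
        Finset.sum_congr rfl fun h _ => Hh h
    _ = ∫ x, ∑ h : Fin e → Fin d, (∏ l, x (g0 l)) * ((∏ l, x (h l)) * (∏ l, x (h l))) ∂σ :=
        (integral_finset_sum _ fun h _ => int3 h).symm
    _ = ∫ x, ∏ l, x (g0 l) ∂σ := by
        refine integral_congr_ae (hsupp.mono fun x hx => ?_)
        show ∑ h : Fin e → Fin d, (∏ l, x (g0 l)) * ((∏ l, x (h l)) * ∏ l, x (h l))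
          = ∏ l, x (g0 l)
        rw [← Finset.mul_sum, sum_prod_sq e hx, mul_one]

end WTD

namespace WTD
set_option linter.unusedSectionVars false
variable {d : ℕ}
variable (σ : Measure (EuclideanSpace ℝ (Fin d))) [IsProbabilityMeasure σ]

lemma toMultiset_map_prod (α : Fin d →₀ ℕ) (f : Fin d → ℝ) :
    ((Finsupp.toMultiset α).map f).prod = α.prod fun i k => f i ^ k := by
  classical
  induction α using Finsupp.induction with
  | zero => simp
  | single_add a nn φ ha hn ih =>
    rw [Finsupp.toMultiset_add, Multiset.map_add, Multiset.prod_add, ih,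
      Finsupp.toMultiset_single,
      Finsupp.prod_add_index' (fun _ => pow_zero _) (fun _ _ _ => pow_add _ _ _),
      Multiset.map_nsmul]
    rw [Finsupp.prod_single_index (h := fun i k => f i ^ k) (pow_zero _)]
    simp [Multiset.prod_nsmul]

lemma finsupp_realize (α : Fin d →₀ ℕ) :
    ∃ g : Fin (α.sum fun _ e => e) → Fin d,
      ∀ f : Fin d → ℝ, (∏ l, f (g l)) = ∏ i, f i ^ α i := by
  classical
  have hcard : (Finsupp.toMultiset α).toList.length = (α.sum fun _ e => e) := by
    rw [Multiset.length_toList, Finsupp.card_toMultiset]; rfl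
  refine ⟨fun l => (Finsupp.toMultiset α).toList.get (Fin.cast hcard.symm l), fun f => ?_⟩
  calc (∏ l : Fin (α.sum fun _ e => e),
          f ((Finsupp.toMultiset α).toList.get (Fin.cast hcard.symm l)))
      = ∏ l : Fin ((Finsupp.toMultiset α).toList.length),
          f ((Finsupp.toMultiset α).toList.get l) :=
        Fintype.prod_equiv (finCongr hcard.symm) _ _ (fun l => rfl)
    _ = (List.map f (Finsupp.toMultiset α).toList).prod := by
        rw [show List.map f (Finsupp.toMultiset α).toList
            = List.ofFn (f ∘ (Finsupp.toMultiset α).toList.get) from by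
          rw [← List.map_ofFn, List.ofFn_get], List.prod_ofFn]
        rfl
    _ = ((↑((Finsupp.toMultiset α).toList) : Multiset (Fin d)).map f).prod := by
        rw [Multiset.map_coe, Multiset.prod_coe]
    _ = ((Finsupp.toMultiset α).map f).prod := by rw [Multiset.coe_toList]
    _ = α.prod fun i k => f i ^ k := toMultiset_map_prod α f
    _ = ∏ i, f i ^ α i := Finsupp.prod_fintype _ _ fun i => pow_zero _

lemma cont_monoF (α : Fin d →₀ ℕ) :
    Continuous fun x : EuclideanSpace ℝ (Fin d) => ∏ i, (x i) ^ α i :=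
  continuous_finset_prod _ fun i _ => (PiLp.continuous_apply _ _ i).pow _

lemma integrable_monoF (hsupp : ∀ᵐ x ∂σ, ‖x‖ = 1) (α : Fin d →₀ ℕ) :
    Integrable (fun x => ∏ i, (x i) ^ α i) σ := by
  refine integrable_of_bdd σ hsupp (cont_monoF α) (fun x hx => ?_)
  rw [Finset.abs_prod]
  refine Finset.prod_le_one (fun _ _ => abs_nonneg _) (fun i _ => ?_)
  rw [abs_pow]
  exact pow_le_one₀ (abs_nonneg _) (abs_coord_le_one hx i)

lemma mono_eq (hd : 2 ≤ d) (hsupp : ∀ᵐ x ∂σ, ‖x‖ = 1)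
    (hinv : ∀ O : (EuclideanSpace ℝ (Fin d)) ≃ₗᵢ[ℝ] (EuclideanSpace ℝ (Fin d)),
      Measure.map (⇑O) σ = σ)
    {n : ℕ} (v : Fin n → EuclideanSpace ℝ (Fin d)) (hv : ∀ j, ‖v j‖ = 1)
    (w : Fin n → ℝ) (hw : ∑ j, w j = 1) (t : ℕ)
    (h1 : ∑ j, ∑ k, w j * w k * (inner ℝ (v j) (v k) : ℝ) ^ t = sphericalMoment d t)
    (h2 : ∑ j, ∑ k, w j * w k * (inner ℝ (v j) (v k) : ℝ) ^ (t - 1)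
      = sphericalMoment d (t - 1))
    (α : Fin d →₀ ℕ) (hα : (α.sum fun _ e => e) ≤ t) :
    ∑ j, w j * ∏ i, (v j i) ^ α i = ∫ x, ∏ i, (x i) ^ α i ∂σ := by
  classical
  set k := α.sum fun _ e => e with hk
  obtain ⟨g0, hg0⟩ := finsupp_realize α
  have hme : ∃ e m, ((k + (e + e) = m) ∧ (m = t ∨ m = t - 1)) := by
    rcases Nat.even_or_odd (t - k) with ⟨c, hc⟩ | ⟨c, hc⟩
    · exact ⟨c, t, by omega, Or.inl rfl⟩
    · exact ⟨c, t - 1, by omega, Or.inr rfl⟩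
  obtain ⟨e, m, hm, hmt⟩ := hme
  have H : ∀ g : Fin m → Fin d, ∑ j, w j * ∏ l, v j (g l) = ∫ x, ∏ l, x (g l) ∂σ := by
    rcases hmt with rfl | rfl
    · exact gmom_eq σ hd hsupp hinv v hv w hw _ h1
    · exact gmom_eq σ hd hsupp hinv v hv w hw _ h2
  have hpad := gmom_pad σ hsupp v hv w hm H g0
  calc ∑ j, w j * ∏ i, (v j i) ^ α i
      = ∑ j, w j * ∏ l, v j (g0 l) :=
        Finset.sum_congr rfl fun j _ => by rw [hg0 (v j)]
    _ = ∫ x, ∏ l, x (g0 l) ∂σ := hpad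
    _ = ∫ x, ∏ i, (x i) ^ α i ∂σ := by
        congr 1; funext x; rw [hg0 x]

lemma integrable_inner_pow (hsupp : ∀ᵐ x ∂σ, ‖x‖ = 1)
    (y : EuclideanSpace ℝ (Fin d)) (hy : ‖y‖ = 1) (m : ℕ) :
    Integrable (fun x => (inner ℝ x y : ℝ) ^ m) σ := by
  refine integrable_of_bdd σ hsupp ((continuous_id.inner continuous_const).pow m)
    (fun x hx => ?_)
  rw [abs_pow]
  refine pow_le_one₀ (abs_nonneg _) ?_
  calc |(inner ℝ x y : ℝ)| ≤ ‖x‖ * ‖y‖ := abs_real_inner_le_norm x y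
    _ = 1 := by rw [hx, hy, one_mul]

lemma forward (hd : 2 ≤ d) (hsupp : ∀ᵐ x ∂σ, ‖x‖ = 1)
    (hinv : ∀ O : (EuclideanSpace ℝ (Fin d)) ≃ₗᵢ[ℝ] (EuclideanSpace ℝ (Fin d)),
      Measure.map (⇑O) σ = σ)
    (t : ℕ) {n : ℕ} (v : Fin n → EuclideanSpace ℝ (Fin d)) (hv : ∀ j, ‖v j‖ = 1)
    (w : Fin n → ℝ) (hw : ∑ j, w j = 1)
    (H : ∀ p : MvPolynomial (Fin d) ℝ, p.totalDegree ≤ t →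
        ∑ j, w j * MvPolynomial.eval (fun i => v j i) p =
          ∫ x, MvPolynomial.eval (fun i => x i) p ∂σ)
    (m : ℕ) (hmt : m ≤ t) :
    ∑ j, ∑ k, w j * w k * (inner ℝ (v j) (v k) : ℝ) ^ m = sphericalMoment d m := by
  classical
  set p : MvPolynomial (Fin d) ℝ :=
    ∑ k : Fin n, MvPolynomial.C (w k) *
      (∑ i : Fin d, MvPolynomial.C (v k i) * MvPolynomial.X i) ^ m with hp
  have hdeg : p.totalDegree ≤ t := by
    refine le_trans (MvPolynomial.totalDegree_finset_sum _ _) (Finset.sup_le fun k _ => ?_)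
    refine le_trans (MvPolynomial.totalDegree_mul _ _) ?_
    rw [MvPolynomial.totalDegree_C, zero_add]
    refine le_trans (MvPolynomial.totalDegree_pow _ _) ?_
    have hq : (∑ i : Fin d, MvPolynomial.C (v k i) * MvPolynomial.X i).totalDegree ≤ 1 := by
      refine le_trans (MvPolynomial.totalDegree_finset_sum _ _) (Finset.sup_le fun i _ => ?_)
      refine le_trans (MvPolynomial.totalDegree_mul _ _) ?_
      rw [MvPolynomial.totalDegree_C, MvPolynomial.totalDegree_X]
    calc m * (∑ i : Fin d, MvPolynomial.C (v k i) * MvPolynomial.X i).totalDegree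
        ≤ m * 1 := Nat.mul_le_mul_left m hq
      _ = m := mul_one m
      _ ≤ t := hmt
  have heval : ∀ u : EuclideanSpace ℝ (Fin d),
      MvPolynomial.eval (fun i => u i) p = ∑ k, w k * (inner ℝ u (v k) : ℝ) ^ m := by
    intro u
    rw [hp]
    simp only [map_sum, map_mul, MvPolynomial.eval_C, map_pow, MvPolynomial.eval_X]
    refine Finset.sum_congr rfl fun k _ => ?_
    rw [inner_eq]
    congr 2
    exact Finset.sum_congr rfl fun i _ => by ring
  have hHp := H p hdeg
  calc ∑ j, ∑ k, w j * w k * (inner ℝ (v j) (v k) : ℝ) ^ m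
      = ∑ j, w j * MvPolynomial.eval (fun i => v j i) p := by
        refine Finset.sum_congr rfl fun j _ => ?_
        rw [heval (v j), Finset.mul_sum]
        exact Finset.sum_congr rfl fun k _ => by ring
    _ = ∫ x, MvPolynomial.eval (fun i => x i) p ∂σ := hHp
    _ = ∫ x, ∑ k, w k * (inner ℝ x (v k) : ℝ) ^ m ∂σ := by
        congr 1; funext x; rw [heval x]
    _ = ∑ k, w k * sphericalMoment d m := by
        rw [integral_finset_sum _ fun k _ =>
          ((integrable_inner_pow σ hsupp (v k) (hv k) m).const_mul _)]
        refine Finset.sum_congr rfl fun k _ => ?_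
        rw [integral_const_mul, moment_star σ hd hsupp hinv m (hv k)]
    _ = sphericalMoment d m := by rw [← Finset.sum_mul, hw, one_mul]

end WTD

/-- Unit vectors `v_j` with weights `w_j` summing to 1 form a weighted spherical
`t`-design (they integrate every polynomial of degree at most `t` against the
rotation-invariant probability measure `σ` on the sphere) iff
`Σ Σ w_j w_k ⟨v_j,v_k⟩^t = b_t(ℝ^d)` and `Σ Σ w_j w_k ⟨v_j,v_k⟩^{t-1} = b_{t-1}(ℝ^d)`. -/
theorem weighted_t_design_characterisation (d : ℕ) (hd : 2 ≤ d)
    (σ : Measure (EuclideanSpace ℝ (Fin d))) [IsProbabilityMeasure σ]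
    (hsupp : ∀ᵐ x ∂σ, ‖x‖ = 1)
    (hinv : ∀ O : (EuclideanSpace ℝ (Fin d)) ≃ₗᵢ[ℝ] (EuclideanSpace ℝ (Fin d)),
      Measure.map (⇑O) σ = σ)
    (t : ℕ) (ht : 1 ≤ t)
    (n : ℕ) (v : Fin n → EuclideanSpace ℝ (Fin d)) (hv : ∀ j, ‖v j‖ = 1)
    (w : Fin n → ℝ) (hw : ∑ j, w j = 1) :
    (∀ p : MvPolynomial (Fin d) ℝ, p.totalDegree ≤ t →
        ∑ j, w j * MvPolynomial.eval (fun i => v j i) p =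
          ∫ x, MvPolynomial.eval (fun i => x i) p ∂σ) ↔
    (∑ j, ∑ k, w j * w k * (inner ℝ (v j) (v k) : ℝ) ^ t = sphericalMoment d t ∧
     ∑ j, ∑ k, w j * w k * (inner ℝ (v j) (v k) : ℝ) ^ (t - 1) =
       sphericalMoment d (t - 1)) := by
  classical
  constructor
  · intro H
    exact ⟨WTD.forward σ hd hsupp hinv t v hv w hw H t le_rfl,
      WTD.forward σ hd hsupp hinv t v hv w hw H (t - 1) (Nat.sub_le t 1)⟩
  · rintro ⟨h1, h2⟩ p hp
    have key : ∀ α ∈ p.support,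
        ∑ j, w j * ∏ i, (v j i) ^ α i = ∫ x, ∏ i, (x i) ^ α i ∂σ := fun α hα =>
      WTD.mono_eq σ hd hsupp hinv v hv w hw t h1 h2 α
        (le_trans (MvPolynomial.le_totalDegree hα) hp)
    calc ∑ j, w j * MvPolynomial.eval (fun i => v j i) p
        = ∑ j, w j * ∑ α ∈ p.support,
            MvPolynomial.coeff α p * ∏ i, (v j i) ^ α i := by
          refine Finset.sum_congr rfl fun j _ => ?_
          rw [MvPolynomial.eval_eq']
      _ = ∑ α ∈ p.support, ∑ j,
            MvPolynomial.coeff α p * (w j * ∏ i, (v j i) ^ α i) := by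
          rw [Finset.sum_comm]
          refine Finset.sum_congr rfl fun j _ => ?_
          rw [Finset.mul_sum]
          exact Finset.sum_congr rfl fun α _ => by ring
      _ = ∑ α ∈ p.support, MvPolynomial.coeff α p * ∫ x, ∏ i, (x i) ^ α i ∂σ := by
          refine Finset.sum_congr rfl fun α hα => ?_
          rw [← Finset.mul_sum, key α hα]
      _ = ∫ x, ∑ α ∈ p.support, MvPolynomial.coeff α p * ∏ i, (x i) ^ α i ∂σ := by
          rw [integral_finset_sum _ fun α _ =>
            ((WTD.integrable_monoF σ hsupp α).const_mul _)]
          exact Finset.sum_congr rfl fun α _ => (integral_const_mul _ _).symm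
      _ = ∫ x, MvPolynomial.eval (fun i => x i) p ∂σ := by
          congr 1; funext x; rw [MvPolynomial.eval_eq']
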